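/- Suppose f is m-strongly convex with M-Lipschitz gradient and iterates satisfy ∇f(x_{t+1}) − ∇f(x*) = −A^{1/2}(v_{t+1} − v*) − ε(x_{t+1} − x_t) for a symmetric PSD matrix A, with v_{t+1} − v_t = αA^{1/2}(x_{t+1} − x*). Then (2αmM/(m+M))‖x_{t+1}−x*‖² + (2α/(m+M))‖∇f(x_{t+1})−∇f(x*)‖² ≤ ‖v_t−v*‖² − ‖v_{t+1}−v_t‖² − ‖v_{t+1}−v*‖² + αε‖x_t−x*‖² − αε‖x_{t+1}−x_t‖² − αε‖x_{t+1}−x*‖². -/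

import Mathlib

open Matrix

/-- The positive semidefinite square root, as defined in Mathlib (Dec 2024). -/
noncomputable def Matrix.PosSemidef.sqrt {n : Type*} [Fintype n] [DecidableEq n]
    {A : Matrix n n ℝ} (hA : A.PosSemidef) : Matrix n n ℝ :=
  hA.1.eigenvectorUnitary.1 * diagonal ((√·) ∘ hA.1.eigenvalues) *
  (star hA.1.eigenvectorUnitary : Matrix n n ℝ)

lemma pmm_sqrt_isHermitian {n : Type*} [Fintype n] [DecidableEq n]
    {A : Matrix n n ℝ} (hA : A.PosSemidef) : hA.sqrt.IsHermitian := by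
  unfold Matrix.PosSemidef.sqrt
  rw [Matrix.star_eq_conjTranspose]
  exact Matrix.isHermitian_mul_mul_conjTranspose _ (Matrix.isHermitian_diagonal _)

open RealInnerProductSpace

section PMMAux
variable {E : Type*} [NormedAddCommGroup E] [InnerProductSpace ℝ E]

lemma taylor_upper (f : E → ℝ) (c : ℝ) (hf : ContDiff ℝ 2 f)
    (hc : ∀ x v : E, fderiv ℝ (fderiv ℝ f) x v v ≤ c * ‖v‖ ^ 2)
    (x v : E) : f (x + v) ≤ f x + fderiv ℝ f x v + c / 2 * ‖v‖ ^ 2 := by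
  have hd1 : Differentiable ℝ f := hf.differentiable (by norm_num)
  have hF : ContDiff ℝ 1 (fderiv ℝ f) := hf.fderiv_right (by norm_num)
  have hd2 : Differentiable ℝ (fderiv ℝ f) := hF.differentiable (by norm_num)
  have hγ : ∀ t : ℝ, HasDerivAt (fun s : ℝ => x + s • v) v t := by
    intro t
    simpa using ((hasDerivAt_id t).smul_const v).const_add x
  set q : ℝ → ℝ := fun t => fderiv ℝ f (x + t • v) v with hqdef
  have hq : ∀ t : ℝ, HasDerivAt q (fderiv ℝ (fderiv ℝ f) (x + t • v) v v) t := by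
    intro t
    have h2 : HasDerivAt (fun s : ℝ => fderiv ℝ f (x + s • v))
        (fderiv ℝ (fderiv ℝ f) (x + t • v) v) t :=
      (hd2 _).hasFDerivAt.comp_hasDerivAt t (hγ t)
    simpa using h2.clm_apply (hasDerivAt_const t v)
  have hp : ∀ t : ℝ, HasDerivAt (fun s : ℝ => f (x + s • v)) (q t) t := fun t =>
    (hd1 _).hasFDerivAt.comp_hasDerivAt t (hγ t)
  -- step C : q t ≤ q 0 + c * t * ‖v‖^2 for t ≥ 0
  have hχ : ∀ t : ℝ, HasDerivAt (fun s : ℝ => c * ‖v‖ ^ 2 * s - q s)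
      (c * ‖v‖ ^ 2 - fderiv ℝ (fderiv ℝ f) (x + t • v) v v) t := by
    intro t
    exact (((hasDerivAt_id t).const_mul (c * ‖v‖ ^ 2)).sub (hq t)).congr_deriv (by simp)
  have hmono : Monotone (fun s : ℝ => c * ‖v‖ ^ 2 * s - q s) := by
    apply monotone_of_deriv_nonneg (fun t => (hχ t).differentiableAt)
    intro t
    rw [(hχ t).deriv]
    have := hc (x + t • v) v
    linarith
  have hqle : ∀ t : ℝ, 0 ≤ t → q t ≤ q 0 + c * t * ‖v‖ ^ 2 := by
    intro t ht
    have := hmono ht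
    simp only [mul_zero, sub_le_iff_le_add] at this ⊢
    linarith [this]
  -- step D
  have hψ : ∀ t : ℝ, HasDerivAt (fun s : ℝ => f (x + s • v) - s * q 0 - c / 2 * ‖v‖ ^ 2 * s ^ 2)
      (q t - q 0 - c / 2 * ‖v‖ ^ 2 * (2 * t)) t := by
    intro t
    have h1 : HasDerivAt (fun s : ℝ => s * q 0) (q 0) t := by
      simpa using (hasDerivAt_id t).mul_const (q 0)
    have h2 : HasDerivAt (fun s : ℝ => c / 2 * ‖v‖ ^ 2 * s ^ 2) (c / 2 * ‖v‖ ^ 2 * (2 * t)) t := by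
      simpa using (hasDerivAt_pow 2 t).const_mul (c / 2 * ‖v‖ ^ 2)
    exact ((hp t).sub h1).sub h2
  have hanti : AntitoneOn (fun s : ℝ => f (x + s • v) - s * q 0 - c / 2 * ‖v‖ ^ 2 * s ^ 2)
      (Set.Ici (0 : ℝ)) := by
    apply antitoneOn_of_deriv_nonpos (convex_Ici 0)
    · exact (Continuous.continuousOn (by
        fun_prop))
    · intro t _
      exact (hψ t).differentiableAt.differentiableWithinAt
    · intro t ht
      rw [interior_Ici] at ht
      rw [(hψ t).deriv]
      have := hqle t (le_of_lt ht)
      nlinarith [this]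
  have h01 := hanti (Set.self_mem_Ici) (by norm_num : (1:ℝ) ∈ Set.Ici (0:ℝ)) zero_le_one
  simp only [zero_smul, add_zero, one_smul, zero_mul, sub_zero, one_pow, mul_one,
    zero_pow, mul_zero] at h01
  have hq0 : q 0 = fderiv ℝ f x v := by simp [hqdef]
  rw [hq0] at h01
  linarith

lemma neg_fderiv2 (f : E → ℝ) (x v : E) :
    fderiv ℝ (fderiv ℝ (fun y => -f y)) x v v = -(fderiv ℝ (fderiv ℝ f) x v v) := by
  have h1 : (fderiv ℝ (fun y => -f y)) = fun y => -(fderiv ℝ f y) := by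
    funext y; exact fderiv_neg
  rw [h1, fderiv_fun_neg]
  simp

lemma coco (f : E → ℝ) (g : E → E) (L : ℝ) (hL : 0 < L)
    (Hu : ∀ x y : E, f y ≤ f x + ⟪g x, y - x⟫ + L / 2 * ‖y - x‖ ^ 2)
    (Hl : ∀ x y : E, f x + ⟪g x, y - x⟫ ≤ f y) (x y : E) :
    f x + ⟪g x, y - x⟫ + 1 / (2 * L) * ‖g y - g x‖ ^ 2 ≤ f y := by
  set u := g y - g x with hu
  set z := y - (1 / L) • u with hz
  have h1 := Hl x z
  have h2 := Hu y z
  have e1 : ⟪g x, z - x⟫ = ⟪g x, y - x⟫ - (1 / L) * ⟪g x, u⟫ := by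
    rw [hz]
    rw [show y - (1 / L) • u - x = (y - x) - (1 / L) • u by abel]
    rw [inner_sub_right, real_inner_smul_right]
  have e2 : ⟪g y, z - y⟫ = -((1 / L) * ⟪g y, u⟫) := by
    rw [hz, show y - (1 / L) • u - y = -((1 / L) • u) by abel, inner_neg_right,
      real_inner_smul_right]
  have e3 : ‖z - y‖ ^ 2 = (1 / L) ^ 2 * ‖u‖ ^ 2 := by
    rw [hz, show y - (1 / L) • u - y = -((1 / L) • u) by abel, norm_neg, norm_smul]
    rw [Real.norm_eq_abs, abs_of_pos (by positivity : (0:ℝ) < 1 / L), mul_pow]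
  have e4 : ⟪g y, u⟫ - ⟪g x, u⟫ = ‖u‖ ^ 2 := by
    rw [← inner_sub_left, ← hu, real_inner_self_eq_norm_sq]
  rw [e1] at h1
  rw [e2, e3] at h2
  have key : L / 2 * ((1 / L) ^ 2 * ‖u‖ ^ 2) = 1 / (2 * L) * ‖u‖ ^ 2 := by
    field_simp
  rw [key] at h2
  have e5 : 1 / L * (inner ℝ (g y) u : ℝ) - 1 / L * inner ℝ (g x) u = 1 / L * ‖u‖ ^ 2 := by
    rw [← mul_sub, e4]
  have e6 : 1 / L * ‖u‖ ^ 2 = 2 * (1 / (2 * L) * ‖u‖ ^ 2) := by field_simp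
  linarith

variable [CompleteSpace E]

lemma flip_inner (p q u v : E) : ⟪p, u - v⟫ + ⟪q, v - u⟫ = -⟪p - q, v - u⟫ := by
  rw [inner_sub_left, show (u - v : E) = -(v - u) by abel, inner_neg_right]; ring

lemma coercivity (f : E → ℝ) (m M : ℝ) (hm : 0 < m) (hmM : m ≤ M) (hf : ContDiff ℝ 2 f)
    (hH : ∀ x v : E, m * ‖v‖ ^ 2 ≤ fderiv ℝ (fderiv ℝ f) x v v ∧
      fderiv ℝ (fderiv ℝ f) x v v ≤ M * ‖v‖ ^ 2)
    (x y : E) :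
    m * M * ‖x - y‖ ^ 2 + ‖gradient f x - gradient f y‖ ^ 2 ≤
      (m + M) * ⟪gradient f x - gradient f y, x - y⟫ := by
  have hM : (0:ℝ) < M := lt_of_lt_of_le hm hmM
  set g : E → E := fun z => gradient f z with hgdef
  have hg : ∀ (a w : E), ⟪g a, w⟫ = fderiv ℝ f a w := by
    intro a w
    rw [hgdef]
    unfold gradient
    rw [← InnerProductSpace.toDual_apply_apply, LinearIsometryEquiv.apply_symm_apply]
  -- upper Taylor in inner form
  have Hu : ∀ a b : E, f b ≤ f a + ⟪g a, b - a⟫ + M / 2 * ‖b - a‖ ^ 2 := by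
    intro a b
    have hab : a + (b - a) = b := by abel
    have := taylor_upper f M hf (fun x v => (hH x v).2) a (b - a)
    rw [hab, ← hg] at this
    exact this
  -- lower Taylor in inner form
  have Hlm : ∀ a b : E, f a + ⟪g a, b - a⟫ + m / 2 * ‖b - a‖ ^ 2 ≤ f b := by
    intro a b
    have hab : a + (b - a) = b := by abel
    have hneg := taylor_upper (fun z => -f z) (-m) hf.neg
      (fun x v => by
        rw [neg_fderiv2]
        have := (hH x v).1
        linarith) a (b - a)
    rw [hab] at hneg
    have hfd : fderiv ℝ (fun y => -f y) a (b - a) = -(fderiv ℝ f a (b - a)) := by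
      rw [fderiv_fun_neg]; simp
    rw [hfd, ← hg] at hneg
    linarith
  have Hl0 : ∀ a b : E, f a + ⟪g a, b - a⟫ ≤ f b := by
    intro a b
    have := Hlm a b
    nlinarith [sq_nonneg ‖b - a‖, hm]
  -- strong monotonicity
  have inner_flip : ⟪g x, y - x⟫ + ⟪g y, x - y⟫ = -⟪g x - g y, x - y⟫ :=
    flip_inner (g x) (g y) y x
  have mono : m * ‖x - y‖ ^ 2 ≤ ⟪g x - g y, x - y⟫ := by
    have h1 := Hlm x y
    have h2 := Hlm y x
    have h4 : ‖y - x‖ = ‖x - y‖ := norm_sub_rev _ _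
    rw [h4] at h1
    linarith [inner_flip]
  rcases eq_or_lt_of_le hmM with heq | hlt
  · -- m = M
    have cocoM := coco f g M hM Hu Hl0
    have c1 := cocoM x y
    have c2 := coco f g M hM Hu Hl0 y x
    have h3 := inner_flip
    have h4 : ‖g x - g y‖ = ‖g y - g x‖ := norm_sub_rev _ _
    have hcc : 1 / M * ‖g x - g y‖ ^ 2 ≤ ⟪g x - g y, x - y⟫ := by
      rw [h4]
      have : 1 / M * ‖g y - g x‖ ^ 2 = 2 * (1 / (2 * M) * ‖g y - g x‖ ^ 2) := by
        field_simp
      rw [this]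
      rw [h4] at c2
      linarith
    have e1 : M * (1 / M * ‖g x - g y‖ ^ 2) = ‖g x - g y‖ ^ 2 := by field_simp
    have e2 := mul_le_mul_of_nonneg_left hcc hM.le
    have e3 := mul_le_mul_of_nonneg_left mono hM.le
    rw [e1] at e2
    subst heq
    nlinarith [e2, e3]
  · -- m < M
    set L : ℝ := M - m with hLdef
    have hL : 0 < L := sub_pos.mpr hlt
    set h : E → ℝ := fun z => f z - m / 2 * ‖z‖ ^ 2 with hhdef
    set G : E → E := fun z => g z - m • z with hGdef
    have expand : ∀ a b : E, ‖b‖ ^ 2 = ‖a‖ ^ 2 + 2 * ⟪a, b - a⟫ + ‖b - a‖ ^ 2 := by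
      intro a b
      have hab : a + (b - a) = b := by abel
      calc ‖b‖ ^ 2 = ‖a + (b - a)‖ ^ 2 := by rw [hab]
        _ = ‖a‖ ^ 2 + 2 * ⟪a, b - a⟫ + ‖b - a‖ ^ 2 := norm_add_sq_real _ _
    have innerG : ∀ a b : E, ⟪G a, b - a⟫ = ⟪g a, b - a⟫ - m * ⟪a, b - a⟫ := by
      intro a b
      rw [hGdef]
      simp only [inner_sub_left, real_inner_smul_left]
    have Hu_h : ∀ a b : E, h b ≤ h a + ⟪G a, b - a⟫ + L / 2 * ‖b - a‖ ^ 2 := by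
      intro a b
      have h1 := Hu a b
      have h2 := expand a b
      have h3 := innerG a b
      simp only [hhdef, hLdef]
      rw [h3, h2]
      ring_nf
      ring_nf at h1
      linarith
    have Hl_h : ∀ a b : E, h a + ⟪G a, b - a⟫ ≤ h b := by
      intro a b
      have h1 := Hlm a b
      have h2 := expand a b
      have h3 := innerG a b
      simp only [hhdef]
      rw [h3, h2]
      ring_nf
      ring_nf at h1
      linarith
    have coch := coco h G L hL Hu_h Hl_h
    have c1 := coch x y
    have c2 := coch y x
    have hGflip : ⟪G x, y - x⟫ + ⟪G y, x - y⟫ = -⟪G x - G y, x - y⟫ :=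
      flip_inner (G x) (G y) y x
    have h4 : ‖G x - G y‖ = ‖G y - G x‖ := norm_sub_rev _ _
    have hcc : 1 / L * ‖G x - G y‖ ^ 2 ≤ ⟪G x - G y, x - y⟫ := by
      rw [h4]
      have : 1 / L * ‖G y - G x‖ ^ 2 = 2 * (1 / (2 * L) * ‖G y - G x‖ ^ 2) := by
        field_simp
      rw [this]
      rw [h4] at c2
      linarith
    -- expand G
    have eG : G x - G y = (g x - g y) - m • (x - y) := by
      simp only [hGdef, smul_sub]
      try abel
    have e5 : ⟪G x - G y, x - y⟫ = ⟪g x - g y, x - y⟫ - m * ‖x - y‖ ^ 2 := by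
      rw [eG, inner_sub_left, real_inner_smul_left, real_inner_self_eq_norm_sq]
      try ring
    have e6 : ‖G x - G y‖ ^ 2 =
        ‖g x - g y‖ ^ 2 - 2 * m * ⟪g x - g y, x - y⟫ + m ^ 2 * ‖x - y‖ ^ 2 := by
      rw [eG, norm_sub_sq_real, real_inner_smul_right, norm_smul, Real.norm_eq_abs,
        abs_of_pos hm, mul_pow]
      try ring
    rw [e5, e6] at hcc
    have hmul := mul_le_mul_of_nonneg_left hcc hL.le
    have e7 : L * (1 / L * (‖g x - g y‖ ^ 2 - 2 * m * ⟪g x - g y, x - y⟫ + m ^ 2 * ‖x - y‖ ^ 2))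
        = ‖g x - g y‖ ^ 2 - 2 * m * ⟪g x - g y, x - y⟫ + m ^ 2 * ‖x - y‖ ^ 2 := by
      field_simp
    rw [e7] at hmul
    simp only [hLdef] at hmul
    nlinarith [hmul]

end PMMAux

theorem pmm_descent_inequality {N : ℕ} (f : EuclideanSpace ℝ (Fin N) → ℝ)
    (m M α ε : ℝ) (hm : 0 < m) (hmM : m ≤ M) (hα : 0 < α) (hε : 0 < ε)
    (hf : ContDiff ℝ 2 f)
    (hHess : ∀ x v : EuclideanSpace ℝ (Fin N),
      m * ‖v‖ ^ 2 ≤ iteratedFDeriv ℝ 2 f x ![v, v] ∧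
      iteratedFDeriv ℝ 2 f x ![v, v] ≤ M * ‖v‖ ^ 2)
    (A : Matrix (Fin N) (Fin N) ℝ) (hA : A.PosSemidef)
    (x0 x1 xs v0 v1 vs : EuclideanSpace ℝ (Fin N))
    (hopt : gradient f x1 - gradient f xs =
      -(Matrix.toEuclideanLin hA.sqrt (v1 - vs)) - ε • (x1 - x0))
    (hdual : v1 - v0 = α • Matrix.toEuclideanLin hA.sqrt (x1 - xs)) :
    2 * α * m * M / (m + M) * ‖x1 - xs‖ ^ 2 +
      2 * α / (m + M) * ‖gradient f x1 - gradient f xs‖ ^ 2 ≤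
    ‖v0 - vs‖ ^ 2 - ‖v1 - v0‖ ^ 2 - ‖v1 - vs‖ ^ 2 +
      α * ε * ‖x0 - xs‖ ^ 2 - α * ε * ‖x1 - x0‖ ^ 2 - α * ε * ‖x1 - xs‖ ^ 2 := by
  have hH : ∀ x v : EuclideanSpace ℝ (Fin N),
      m * ‖v‖ ^ 2 ≤ fderiv ℝ (fderiv ℝ f) x v v ∧
      fderiv ℝ (fderiv ℝ f) x v v ≤ M * ‖v‖ ^ 2 := by
    intro x v
    have h2 := iteratedFDeriv_two_apply (𝕜 := ℝ) f x ![v, v]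
    simp only [Matrix.cons_val_zero, Matrix.cons_val_one, Matrix.head_cons] at h2
    rw [← h2]
    exact hHess x v
  have core := coercivity f m M hm hmM hf hH x1 xs
  set Δg := gradient f x1 - gradient f xs with hΔg
  set S := Matrix.toEuclideanLin hA.sqrt with hS
  have hSym : ∀ a b : EuclideanSpace ℝ (Fin N), ⟪S a, b⟫ = ⟪a, S b⟫ :=
    fun a b => (Matrix.isHermitian_iff_isSymmetric.mp (pmm_sqrt_isHermitian hA)) a b
  have hv : ‖v0 - vs‖ ^ 2 = ‖v1 - vs‖ ^ 2 - 2 * ⟪v1 - vs, v1 - v0⟫ + ‖v1 - v0‖ ^ 2 := by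
    rw [show v0 - vs = (v1 - vs) - (v1 - v0) by abel]
    exact norm_sub_sq_real _ _
  have hx : ‖x0 - xs‖ ^ 2 = ‖x1 - xs‖ ^ 2 - 2 * ⟪x1 - x0, x1 - xs⟫ + ‖x1 - x0‖ ^ 2 := by
    rw [show x0 - xs = (x1 - xs) - (x1 - x0) by abel, norm_sub_sq_real,
      real_inner_comm (x1 - xs) (x1 - x0)]
  have hSval : S (v1 - vs) = -Δg - ε • (x1 - x0) := by
    rw [hopt]; abel
  have hiv : ⟪v1 - vs, v1 - v0⟫ =
      α * (-⟪Δg, x1 - xs⟫ - ε * ⟪x1 - x0, x1 - xs⟫) := by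
    rw [hdual, real_inner_smul_right, ← hSym (v1 - vs) (x1 - xs), hSval, inner_sub_left,
      inner_neg_left, real_inner_smul_left]
  have hRHS : ‖v0 - vs‖ ^ 2 - ‖v1 - v0‖ ^ 2 - ‖v1 - vs‖ ^ 2 +
      α * ε * ‖x0 - xs‖ ^ 2 - α * ε * ‖x1 - x0‖ ^ 2 - α * ε * ‖x1 - xs‖ ^ 2 =
      2 * α * ⟪Δg, x1 - xs⟫ := by
    rw [hv, hx, hiv]
    ring
  rw [hRHS]
  have hmM0 : (0:ℝ) < m + M := by linarith
  have hpos : (0:ℝ) < 2 * α / (m + M) := by positivity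
  have key := mul_le_mul_of_nonneg_left core hpos.le
  have e1 : 2 * α / (m + M) * ((m + M) * ⟪Δg, x1 - xs⟫) = 2 * α * ⟪Δg, x1 - xs⟫ := by
    field_simp
  rw [e1] at key
  calc 2 * α * m * M / (m + M) * ‖x1 - xs‖ ^ 2 + 2 * α / (m + M) * ‖Δg‖ ^ 2
      = 2 * α / (m + M) * (m * M * ‖x1 - xs‖ ^ 2 + ‖Δg‖ ^ 2) := by ring
    _ ≤ 2 * α * ⟪Δg, x1 - xs⟫ := key
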